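/- arXiv:q-bio/0609046 — 2 statements merged into one kernel-verified Lean document; each statement's English description precedes it below -/
import Mathlib

section
/- Let T be a real-valued random variable on a probability space with T ≥ 0 almost surely and E[T²] < ∞. Then −E[T] ≤ log E[e^{−T}] ≤ −E[T] + (1/2)·Var(T)·e^{E[T]}. In particular, if additionally T ≤ τ almost surely for a constant τ ≥ 0, then 0 ≤ log E[e^{−T}] + E[T] ≤ (1/2)·τ²·e^{τ}. -/
open MeasureTheory

private lemma exp_aux1 {u : ℝ} (hu : u ≤ 0) : Real.exp u ≤ 1 + u + u ^ 2 / 2 := by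
  have key : AntitoneOn (fun u : ℝ => 1 + u + u ^ 2 / 2 - Real.exp u) (Set.Iic 0) := by
    apply antitoneOn_of_deriv_nonpos (convex_Iic 0)
    · exact Continuous.continuousOn (by continuity)
    · intro x hx
      exact ((((hasDerivAt_id x).const_add 1).add
        ((hasDerivAt_pow 2 x).div_const 2)).sub (Real.hasDerivAt_exp x)).differentiableAt.differentiableWithinAt
    · intro x hx
      have hd : HasDerivAt (fun u : ℝ => 1 + u + u ^ 2 / 2 - Real.exp u)
          (1 + x - Real.exp x) x := by
        have h := (((hasDerivAt_id x).const_add 1).add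
          ((hasDerivAt_pow 2 x).div_const 2)).sub (Real.hasDerivAt_exp x)
        refine h.congr_deriv ?_
        norm_num
      rw [hd.deriv]
      have := Real.add_one_le_exp x
      linarith
  have h := key (Set.mem_Iic.2 hu) (Set.mem_Iic.2 le_rfl) hu
  simp only [Real.exp_zero] at h
  norm_num at h
  linarith

private lemma exp_aux2 {u : ℝ} (hu : 0 ≤ u) :
    Real.exp u ≤ 1 + u + u ^ 2 / 2 * Real.exp u := by
  have key : MonotoneOn (fun u : ℝ => (1 + u) * Real.exp (-u) + u ^ 2 / 2 - 1) (Set.Ici 0) := by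
    apply monotoneOn_of_deriv_nonneg (convex_Ici 0)
    · exact Continuous.continuousOn (by continuity)
    · intro x hx
      have hexp : HasDerivAt (fun u : ℝ => Real.exp (-u)) (-Real.exp (-x)) x := by
        simpa [Function.comp_def] using (Real.hasDerivAt_exp (-x)).comp x (hasDerivAt_neg x)
      exact (((((hasDerivAt_id x).const_add 1).mul hexp).add
        ((hasDerivAt_pow 2 x).div_const 2)).sub_const 1).differentiableAt.differentiableWithinAt
    · intro x hx
      rw [interior_Ici] at hx
      have hexp : HasDerivAt (fun u : ℝ => Real.exp (-u)) (-Real.exp (-x)) x := by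
        simpa [Function.comp_def] using (Real.hasDerivAt_exp (-x)).comp x (hasDerivAt_neg x)
      have hd : HasDerivAt (fun u : ℝ => (1 + u) * Real.exp (-u) + u ^ 2 / 2 - 1)
          (x * (1 - Real.exp (-x))) x := by
        have h := ((((hasDerivAt_id x).const_add 1).mul hexp).add
          ((hasDerivAt_pow 2 x).div_const 2)).sub_const 1
        refine h.congr_deriv ?_
        simp [id]
        ring
      rw [hd.deriv]
      have h1 : Real.exp (-x) ≤ 1 := Real.exp_le_one_iff.2 (by linarith [(Set.mem_Ioi.1 hx).le])
      have := (Set.mem_Ioi.1 hx).le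
      nlinarith
  have h := key (Set.self_mem_Ici) (Set.mem_Ici.2 hu) hu
  norm_num at h
  have hmul : Real.exp (-u) * Real.exp u = 1 := by rw [← Real.exp_add]; simp
  nlinarith [hmul, mul_le_mul_of_nonneg_right h (Real.exp_pos u).le]

private lemma exp_key {m u : ℝ} (hm : 0 ≤ m) (hum : u ≤ m) :
    Real.exp u ≤ 1 + u + u ^ 2 / 2 * Real.exp m := by
  have hem : (1:ℝ) ≤ Real.exp m := Real.one_le_exp hm
  rcases le_or_gt u 0 with hu | hu
  · have h := exp_aux1 hu
    nlinarith [sq_nonneg u]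
  · have h := exp_aux2 hu.le
    have h2 : Real.exp u ≤ Real.exp m := Real.exp_le_exp.2 hum
    nlinarith [sq_nonneg u]

/-- Let `T` be a nonnegative (a.s.) random variable on a probability space with
`E[T²] < ∞`.  Then `−E[T] ≤ log E[e^{−T}] ≤ −E[T] + (1/2)·Var(T)·e^{E[T]}`, and if
moreover `T ≤ τ` a.s. for a constant `τ ≥ 0`, then
`0 ≤ log E[e^{−T}] + E[T] ≤ (1/2)·τ²·e^{τ}`. -/
theorem expectation_log_exp_bounds
    {Ω : Type*} [MeasurableSpace Ω] (μ : Measure Ω) [IsProbabilityMeasure μ]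
    (T : Ω → ℝ) (hTmeas : AEStronglyMeasurable T μ)
    (hTnn : ∀ᵐ ω ∂μ, 0 ≤ T ω)
    (hT2 : Integrable (fun ω => T ω ^ 2) μ) :
    (-(∫ ω, T ω ∂μ) ≤ Real.log (∫ ω, Real.exp (-T ω) ∂μ) ∧
      Real.log (∫ ω, Real.exp (-T ω) ∂μ) ≤
        -(∫ ω, T ω ∂μ) +
          1 / 2 * ProbabilityTheory.variance T μ * Real.exp (∫ ω, T ω ∂μ)) ∧
    ∀ τ : ℝ, 0 ≤ τ → (∀ᵐ ω ∂μ, T ω ≤ τ) →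
      0 ≤ Real.log (∫ ω, Real.exp (-T ω) ∂μ) + ∫ ω, T ω ∂μ ∧
        Real.log (∫ ω, Real.exp (-T ω) ∂μ) + ∫ ω, T ω ∂μ ≤
          1 / 2 * τ ^ 2 * Real.exp τ := by
  set m := ∫ ω, T ω ∂μ with hm_def
  have hm0 : 0 ≤ m := integral_nonneg_of_ae hTnn
  have hTmem : MemLp T 2 μ := (memLp_two_iff_integrable_sq hTmeas).2 hT2
  have hTint : Integrable T μ := hTmem.integrable one_le_two
  have hexpMeas : AEStronglyMeasurable (fun ω => Real.exp (-T ω)) μ :=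
    (Real.continuous_exp.comp continuous_neg).comp_aestronglyMeasurable hTmeas
  have hexpInt : Integrable (fun ω => Real.exp (-T ω)) μ := by
    refine Integrable.mono' (integrable_const 1) hexpMeas ?_
    filter_upwards [hTnn] with ω hω
    rw [Real.norm_eq_abs, abs_of_pos (Real.exp_pos _)]
    exact Real.exp_le_one_iff.2 (by linarith)
  -- lower bound
  have hlowpt : ∀ ω, Real.exp (-m) * (1 + m - T ω) ≤ Real.exp (-T ω) := by
    intro ω
    have h := Real.add_one_le_exp (m - T ω)
    have h2 : Real.exp (-m) * Real.exp (m - T ω) = Real.exp (-T ω) := by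
      rw [← Real.exp_add]; ring_nf
    have h3 := mul_le_mul_of_nonneg_left h (Real.exp_pos (-m)).le
    nlinarith [Real.exp_pos (-m)]
  have hlowint : Integrable (fun ω => Real.exp (-m) * (1 + m - T ω)) μ :=
    ((integrable_const (1 + m)).sub hTint).const_mul _
  have hlow : Real.exp (-m) ≤ ∫ ω, Real.exp (-T ω) ∂μ := by
    have h := integral_mono hlowint hexpInt hlowpt
    have hcalc : ∫ ω, Real.exp (-m) * (1 + m - T ω) ∂μ = Real.exp (-m) := by
      rw [MeasureTheory.integral_const_mul, integral_sub (integrable_const _) hTint,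
        integral_const]
      simp [← hm_def]
    linarith [hcalc ▸ h]
  have hEpos : 0 < ∫ ω, Real.exp (-T ω) ∂μ := lt_of_lt_of_le (Real.exp_pos _) hlow
  have hlower : -m ≤ Real.log (∫ ω, Real.exp (-T ω) ∂μ) :=
    (Real.le_log_iff_exp_le hEpos).2 hlow
  -- variance
  have hvar : ProbabilityTheory.variance T μ = ∫ ω, (T ω - m) ^ 2 ∂μ := by
    rw [ProbabilityTheory.variance_eq_integral hTmeas.aemeasurable]
  have hsqint : Integrable (fun ω => (T ω - m) ^ 2) μ :=
    (memLp_two_iff_integrable_sq (hTmeas.sub aestronglyMeasurable_const)).1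
      (hTmem.sub (memLp_const m))
  have hVnn : 0 ≤ ProbabilityTheory.variance T μ := ProbabilityTheory.variance_nonneg T μ
  -- upper bound
  have hubpt : ∀ᵐ ω ∂μ, Real.exp (-T ω) ≤
      Real.exp (-m) * (1 + (m - T ω) + (T ω - m) ^ 2 / 2 * Real.exp m) := by
    filter_upwards [hTnn] with ω hω
    have hkey := exp_key hm0 (show m - T ω ≤ m by linarith)
    have hsq : (m - T ω) ^ 2 = (T ω - m) ^ 2 := by ring
    rw [hsq] at hkey
    have h2 : Real.exp (-m) * Real.exp (m - T ω) = Real.exp (-T ω) := by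
      rw [← Real.exp_add]; ring_nf
    have h3 := mul_le_mul_of_nonneg_left hkey (Real.exp_pos (-m)).le
    linarith [h2 ▸ h3]
  have hubint : Integrable
      (fun ω => Real.exp (-m) * (1 + (m - T ω) + (T ω - m) ^ 2 / 2 * Real.exp m)) μ :=
    (((integrable_const (1:ℝ)).add ((integrable_const m).sub hTint)).add
      ((hsqint.div_const 2).mul_const (Real.exp m))).const_mul _
  have hub : ∫ ω, Real.exp (-T ω) ∂μ ≤
      Real.exp (-m) * (1 + ProbabilityTheory.variance T μ / 2 * Real.exp m) := by
    have h := integral_mono_ae hexpInt hubint hubpt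
    have hcalc : ∫ ω, Real.exp (-m) * (1 + (m - T ω) + (T ω - m) ^ 2 / 2 * Real.exp m) ∂μ
        = Real.exp (-m) * (1 + ProbabilityTheory.variance T μ / 2 * Real.exp m) := by
      rw [MeasureTheory.integral_const_mul]
      congr 1
      have hC : Integrable (fun ω => m - T ω) μ := (integrable_const m).sub hTint
      have hA : Integrable (fun ω => 1 + (m - T ω)) μ := (integrable_const 1).add hC
      have hB : Integrable (fun ω => (T ω - m) ^ 2 / 2 * Real.exp m) μ :=
        (hsqint.div_const 2).mul_const _
      rw [integral_add hA hB, integral_add (integrable_const (1:ℝ)) hC,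
        integral_sub (integrable_const m) hTint,
        MeasureTheory.integral_mul_const, integral_div, integral_const, integral_const,
        hvar]
      simp [← hm_def]
    linarith [hcalc ▸ h]
  have hRHSpos : 0 < Real.exp (-m) * (1 + ProbabilityTheory.variance T μ / 2 * Real.exp m) := by
    have := Real.exp_pos m
    have := Real.exp_pos (-m)
    nlinarith
  have h1pos : 0 < 1 + ProbabilityTheory.variance T μ / 2 * Real.exp m := by
    have := Real.exp_pos m
    nlinarith
  have hupper : Real.log (∫ ω, Real.exp (-T ω) ∂μ) ≤
      -m + 1 / 2 * ProbabilityTheory.variance T μ * Real.exp m := by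
    have hlog := (Real.log_le_log_iff hEpos hRHSpos).2 hub
    rw [Real.log_mul (Real.exp_ne_zero _) (ne_of_gt h1pos), Real.log_exp] at hlog
    have hlog2 := Real.log_le_sub_one_of_pos h1pos
    linarith
  refine ⟨⟨hlower, hupper⟩, ?_⟩
  intro τ hτ hTle
  have hmτ : m ≤ τ := by
    have h := integral_mono_ae hTint (integrable_const τ) hTle
    simpa using h
  refine ⟨by linarith, ?_⟩
  have hVar_le : ProbabilityTheory.variance T μ ≤ τ ^ 2 := by
    rw [hvar]
    have h : ∫ ω, (T ω - m) ^ 2 ∂μ ≤ ∫ _ω, τ ^ 2 ∂μ := by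
      refine integral_mono_ae hsqint (integrable_const _) ?_
      filter_upwards [hTnn, hTle] with ω h1 h2
      exact sq_le_sq' (by linarith) (by linarith)
    simpa using h
  have hexp_le : Real.exp m ≤ Real.exp τ := Real.exp_le_exp.2 hmτ
  have := Real.exp_pos m
  nlinarith [sq_nonneg τ]
end

section
/- Let S be a selective cost with Lipschitz constant K. For all ρ, ρ′, η ∈ H⁺ with ρ(A) ≤ ρ′(A) for every Borel A, the following two bounds hold: sup_{m′ ∈ ℳ} |∫_ℳ K_ρ(m′,m″) η(dm″)| ≤ 2K·η(ℳ), and sup_{m′ ∈ ℳ} |∫_ℳ K_ρ(m′,m″) η(dm″) − ∫_ℳ K_{ρ′}(m′,m″) η(dm″)| ≤ 16K·(ρ′(ℳ) − ρ(ℳ))·η(ℳ). -/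
open MeasureTheory Set Filter
open scoped ENNReal NNReal

noncomputable section

namespace MSEW

/-- `LipLE dE f c` : the bounded-Lipschitz norm of `f`, namely
`sup_x |f x| + sup_{x ≠ y} |f x - f y| / dE x y`, is at most `c`;
phrased without suprema, relative to an abstract distance function `dE`. -/
def LipLE {E : Type*} (dE : E → E → ℝ) (f : E → ℝ) (c : ℝ) : Prop :=
  ∃ a b : ℝ, 0 ≤ a ∧ 0 ≤ b ∧ a + b ≤ c ∧ (∀ x, |f x| ≤ a) ∧
    ∀ x y, |f x - f y| ≤ b * dE x y

/-- Integral of `f : E → ℝ` against a finite integer-valued measure, represented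
as the multiset of its atoms (a genotype). -/
def gInt {E : Type*} (g : Multiset E) (f : E → ℝ) : ℝ := (g.map f).sum

/-- The mass `g(A)` that a genotype `g` assigns to a set `A`. -/
def gMass {E : Type*} (g : Multiset E) (A : Set E) : ℝ := gInt g (A.indicator 1)

/-- The σ-algebra on genotypes generated by the counting functionals
`g ↦ g(A)` for measurable `A`. -/
instance multisetMeasurableSpace {E : Type*} [MeasurableSpace E] :
    MeasurableSpace (Multiset E) :=
  MeasurableSpace.generateFrom
    { s | ∃ (A : Set E) (n : ℕ), MeasurableSet A ∧ s = { g : Multiset E | gMass g A = n } }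

/-- Wasserstein distance between two (finite) measures: the supremum of
differences of integrals of test functions of bounded-Lipschitz norm at most one. -/
def wasDist {E : Type*} [MeasurableSpace E] (dE : E → E → ℝ) (P Q : Measure E) : ℝ :=
  sSup { r | ∃ f : E → ℝ, LipLE dE f 1 ∧ r = |∫ x, f x ∂P - ∫ x, f x ∂Q| }

/-- Wasserstein norm of a finite signed measure, `sup { |∫ f dπ| : ‖f‖_Lip ≤ 1 }`. -/
def wasNorm {E : Type*} [MeasurableSpace E] (dE : E → E → ℝ) (π : SignedMeasure E) : ℝ :=
  wasDist dE π.toJordanDecomposition.posPart π.toJordanDecomposition.negPart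

/-- The Wasserstein metric on genotypes, `d(g,h) = ‖g - h‖_Was`. -/
def dG {M : Type*} [MetricSpace M] (g h : Multiset M) : ℝ :=
  sSup { r | ∃ f : M → ℝ, LipLE dist f 1 ∧ r = |gInt g f - gInt h f| }

/-- The measure on `E` associated with a genotype: the finite sum of Dirac masses. -/
def genMeasure {E : Type*} [MeasurableSpace E] (g : Multiset E) : Measure E :=
  (g.map fun x => Measure.dirac x).sum

/-- The intensity measure `μP` of a law `P` on genotypes: `μP(A) = ∫ g(A) dP(g)`. -/
def intensity {E : Type*} [MeasurableSpace E] (P : Measure (Multiset E)) : Measure E :=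
  P.bind genMeasure

/-- The law `Π_π` of a Poisson random measure with intensity `π`:
`Π_π[F] = e^{-π(univ)} ∑_k (1/k!) ∫ F(δ_{x₁}+⋯+δ_{x_k}) dπ^{⊗k}`. -/
def poissonLaw {M : Type*} [MeasurableSpace M] (π : Measure M) : Measure (Multiset M) :=
  ENNReal.ofReal (Real.exp (-(π Set.univ).toReal)) •
    Measure.sum fun k : ℕ =>
      ((Nat.factorial k : ℝ≥0∞))⁻¹ •
        Measure.map (fun x : Fin k → M => ∑ i, ({x i} : Multiset M))
          (Measure.pi fun _ : Fin k => π)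

/-- A selective cost with Lipschitz constant `K`: a Borel function
`S : 𝒢 → [0,∞)` with `S(0) = 0`, monotone under adding mutations, and
Lipschitz with constant `K` for the Wasserstein metric on genotypes. -/
structure IsSelectiveCost {M : Type*} [MetricSpace M] [MeasurableSpace M]
    (S : Multiset M → ℝ) (K : ℝ) : Prop where
  measurable : Measurable S
  nonneg : ∀ g, 0 ≤ S g
  map_zero : S 0 = 0
  mono : ∀ g h, S g ≤ S (g + h)
  lip : ∀ g h, |S g - S h| ≤ K * dG g h

/-- `F_π(x) = E[S(X^π + δ_x) - S(X^π)]`. -/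
def Fcost {M : Type*} [MeasurableSpace M] (S : Multiset M → ℝ) (π : Measure M) (x : M) : ℝ :=
  ∫ g, (S (g + {x}) - S g) ∂(poissonLaw π)

/-- The kernel `K_ρ(m,m') = E[S(X^ρ+δ_m+δ_{m'}) - S(X^ρ+δ_{m'}) - S(X^ρ+δ_m) + S(X^ρ)]`. -/
def Kker {M : Type*} [MeasurableSpace M] (S : Multiset M → ℝ) (ρ : Measure M)
    (m m' : M) : ℝ :=
  ∫ g, (S (g + {m} + {m'}) - S (g + {m'}) - S (g + {m}) + S g) ∂(poissonLaw ρ)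

/-- The operator `D`: `Dπ` is the measure with density `F_π` with respect to `π`. -/
def Dop {M : Type*} [MeasurableSpace M] (S : Multiset M → ℝ) (ρ : Measure M) : Measure M :=
  ρ.withDensity fun x => ENNReal.ofReal (Fcost S ρ x)

/-- Concavity of a selective cost. -/
def ConcaveCost {M : Type*} (S : Multiset M → ℝ) : Prop :=
  ∀ g h k : Multiset M, S (g + h + k) - S (g + h) ≤ S (g + k) - S g

/-- A solution of the mutation–selection dynamics
`ρ_t(A) = ρ₀(A) + t·ν(A) - ∫₀ᵗ (Dρ_s)(A) ds`: a `‖⋅‖_Was`-continuous curve of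
finite nonnegative measures satisfying the integral equation for `t ≥ 0`. -/
def IsSolution {M : Type*} [MetricSpace M] [MeasurableSpace M]
    (S : Multiset M → ℝ) (ν ρ₀ : Measure M) (ρ : ℝ → Measure M) : Prop :=
  (∀ t, IsFiniteMeasure (ρ t)) ∧ ρ 0 = ρ₀ ∧
  (∀ t, 0 ≤ t → ∀ ε > (0:ℝ), ∃ δ > (0:ℝ), ∀ s, 0 ≤ s → |s - t| < δ →
     wasDist dist (ρ s) (ρ t) < ε) ∧
  ∀ t, 0 ≤ t → ∀ A : Set M, MeasurableSet A →
    ((ρ t) A).toReal = (ρ₀ A).toReal + t * (ν A).toReal -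
      ∫ s in (0:ℝ)..t, ((Dop S (ρ s)) A).toReal

/-- The mutation operator `𝔐_n`: add an independent Poisson cloud of new
mutations with intensity `ν/n`. -/
def mutOp {M : Type*} [MeasurableSpace M] (ν : Measure M) (n : ℕ)
    (P : Measure (Multiset M)) : Measure (Multiset M) :=
  Measure.map (fun p : Multiset M × Multiset M => p.1 + p.2)
    (P.prod (poissonLaw (((n : ℝ≥0∞))⁻¹ • ν)))

/-- The selection operator `𝔖_n`: reweight by `e^{-S/n}` and renormalize. -/
def selOp {M : Type*} [MeasurableSpace M] (S : Multiset M → ℝ) (n : ℕ)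
    (P : Measure (Multiset M)) : Measure (Multiset M) :=
  (∫⁻ g, ENNReal.ofReal (Real.exp (-S g / (n : ℝ))) ∂P)⁻¹ •
    P.withDensity fun g => ENNReal.ofReal (Real.exp (-S g / (n : ℝ)))

/-- The complete Poissonization operator `𝔓P = Π_{μP}`. -/
def poisOp {M : Type*} [MeasurableSpace M] (P : Measure (Multiset M)) :
    Measure (Multiset M) :=
  poissonLaw (intensity P)

/-- Restriction `g_B` of a genotype to a set: `g_B(A) = g(A ∩ B)`. -/
def restrictMS {M : Type*} (g : Multiset M) (B : Set M) : Multiset M :=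
  @Multiset.filter M (· ∈ B) (Classical.decPred _) g

/-- The random segregating set determined by a jointly measurable indicator. -/
def segSet {Ω M : Type*} (χ : Ω × M → Bool) (ω : Ω) : Set M :=
  { x | χ (ω, x) = true }

/-- The recombination operator `ℛ`. -/
def recOp {M Ω : Type*} [MeasurableSpace M] [MeasurableSpace Ω]
    (Pr : Measure Ω) (R : Ω → Set M) (P : Measure (Multiset M)) : Measure (Multiset M) :=
  Measure.map (fun q : Ω × Multiset M × Multiset M =>
      restrictMS q.2.1 (R q.1) + restrictMS q.2.2 ((R q.1)ᶜ))
    (Pr.prod (P.prod P))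

/-- Symmetry of a recombination mechanism: the segregating set and its
complement are identically distributed as random sets. -/
def IsSymmetricMech {M Ω : Type*} [MeasurableSpace M] [MeasurableSpace Ω]
    (Pr : Measure Ω) (R : Ω → Set M) : Prop :=
  ∀ lam : Measure M, IsFiniteMeasure lam → ∀ (p : ℕ) (B : Fin p → Set M),
    (∀ i, MeasurableSet (B i)) →
    Measure.map (fun ω => fun i => (lam (B i ∩ R ω)).toReal) Pr =
    Measure.map (fun ω => fun i => (lam (B i ∩ (R ω)ᶜ)).toReal) Pr

/-- `(ℛ, λ)` is shattering with constant `α`: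
`λ(A)³ ≤ 2α·E[λ(A ∩ R)·λ(A ∩ Rᶜ)]` for every Borel `A`. -/
def IsShattering {M Ω : Type*} [MeasurableSpace M] [MeasurableSpace Ω]
    (Pr : Measure Ω) (R : Ω → Set M) (lam : Measure M) (α : ℝ) : Prop :=
  ∀ A : Set M, MeasurableSet A →
    (lam A).toReal ^ 3 ≤
      2 * α * ∫ ω, (lam (A ∩ R ω)).toReal * (lam (A ∩ (R ω)ᶜ)).toReal ∂Pr

set_option linter.unusedSectionVars false

/-! ### Auxiliary lemmas -/

section AuxBasic

variable {E : Type*}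

lemma gInt_zero (f : E → ℝ) : gInt (0 : Multiset E) f = 0 := by simp [gInt]

lemma gInt_add (g h : Multiset E) (f : E → ℝ) : gInt (g + h) f = gInt g f + gInt h f := by
  simp [gInt]

lemma gInt_singleton (x : E) (f : E → ℝ) : gInt ({x} : Multiset E) f = f x := by simp [gInt]

lemma gInt_cons (a : E) (s : Multiset E) (f : E → ℝ) :
    gInt (a ::ₘ s) f = f a + gInt s f := by simp [gInt]

lemma gInt_finsetSum {ι : Type*} (s : Finset ι) (g : ι → Multiset E) (f : E → ℝ) :
    gInt (∑ i ∈ s, g i) f = ∑ i ∈ s, gInt (g i) f := by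
  classical
  induction s using Finset.induction_on with
  | empty => simp [gInt_zero]
  | insert a s h ih => rw [Finset.sum_insert h, Finset.sum_insert h, gInt_add, ih]

lemma gMass_exists_nat (g : Multiset E) (A : Set E) : ∃ n : ℕ, gMass g A = n := by
  classical
  induction g using Multiset.induction_on with
  | empty => exact ⟨0, by simp [gMass, gInt_zero]⟩
  | cons a s ih =>
    obtain ⟨n, hn⟩ := ih
    have hc : gMass (a ::ₘ s) A = A.indicator 1 a + gMass s A := gInt_cons a s (A.indicator 1)
    by_cases h : a ∈ A
    · exact ⟨n + 1, by rw [hc, hn, Set.indicator_of_mem h]; push_cast; simp [Pi.one_apply]; ring⟩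
    · exact ⟨n, by rw [hc, hn, Set.indicator_of_notMem h, zero_add]⟩

variable [MeasurableSpace E]

lemma measurableSet_gMass_eq {A : Set E} (hA : MeasurableSet A) (n : ℕ) :
    MeasurableSet {g : Multiset E | gMass g A = n} :=
  MeasurableSpace.measurableSet_generateFrom ⟨A, n, hA, rfl⟩

lemma measurable_gMass {A : Set E} (hA : MeasurableSet A) :
    Measurable fun g : Multiset E => gMass g A := by
  intro B hB
  have hBeq : (fun g : Multiset E => gMass g A) ⁻¹' B =
      ⋃ n ∈ {n : ℕ | (n : ℝ) ∈ B}, {g : Multiset E | gMass g A = n} := by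
    ext g
    simp only [Set.mem_preimage, Set.mem_iUnion, Set.mem_setOf_eq]
    constructor
    · intro hg
      obtain ⟨n, hn⟩ := gMass_exists_nat g A
      exact ⟨n, by rwa [← hn], hn⟩
    · rintro ⟨n, hn, h⟩
      rw [h]; exact hn
  rw [hBeq]
  exact MeasurableSet.biUnion (Set.to_countable _) fun n _ => measurableSet_gMass_eq hA n

lemma measurable_multiset_target {X : Type*} [MeasurableSpace X] {T : X → Multiset E}
    (h : ∀ A : Set E, MeasurableSet A → Measurable fun x => gMass (T x) A) :
    Measurable T := by
  apply measurable_generateFrom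
  rintro s ⟨A, n, hA, rfl⟩
  have heq : T ⁻¹' {g : Multiset E | gMass g A = n} =
      (fun x => gMass (T x) A) ⁻¹' {(n : ℝ)} := rfl
  rw [heq]
  exact h A hA (measurableSet_singleton _)

lemma measurable_addConst (h : Multiset E) :
    Measurable fun g : Multiset E => g + h := by
  refine measurable_multiset_target fun A hA => ?_
  have heq : (fun g : Multiset E => gMass (g + h) A) =
      fun g : Multiset E => gMass g A + gMass h A := funext fun g => gInt_add g h _
  rw [heq]
  exact (measurable_gMass hA).add_const _

lemma measurable_addSingleton :
    Measurable fun p : Multiset E × E => p.1 + {p.2} := by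
  refine measurable_multiset_target fun A hA => ?_
  have heq : (fun p : Multiset E × E => gMass (p.1 + {p.2}) A) =
      fun p : Multiset E × E => gMass p.1 A + A.indicator 1 p.2 := by
    funext p
    show gInt (p.1 + {p.2}) (A.indicator 1) = gInt p.1 (A.indicator 1) + A.indicator 1 p.2
    rw [gInt_add, gInt_singleton]
  rw [heq]
  exact ((measurable_gMass hA).comp measurable_fst).add
    ((measurable_const.indicator hA).comp measurable_snd)

lemma measurable_sumSingleton (k : ℕ) :
    Measurable fun x : Fin k → E => ∑ i, ({x i} : Multiset E) := by
  refine measurable_multiset_target fun A hA => ?_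
  have heq : (fun x : Fin k → E => gMass (∑ i, ({x i} : Multiset E)) A) =
      fun x : Fin k → E => ∑ i, A.indicator 1 (x i) := by
    funext x
    show gInt (∑ i, ({x i} : Multiset E)) (A.indicator 1) = _
    rw [gInt_finsetSum]
    exact Finset.sum_congr rfl fun i _ => gInt_singleton _ _
  rw [heq]
  exact Finset.measurable_sum _ fun i _ =>
    (measurable_const.indicator hA).comp (measurable_pi_apply i)

end AuxBasic

section AuxLip

variable {M : Type*} [MetricSpace M] [MeasurableSpace M]

lemma abs_gInt_le {f : M → ℝ} {a : ℝ} (hf : ∀ x, |f x| ≤ a) (g : Multiset M) :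
    |gInt g f| ≤ a * Multiset.card g := by
  induction g using Multiset.induction_on with
  | empty => simp [gInt_zero]
  | cons x s ih =>
    rw [gInt_cons]
    calc |f x + gInt s f| ≤ |f x| + |gInt s f| := abs_add_le _ _
      _ ≤ a + a * Multiset.card s := add_le_add (hf x) ih
      _ = a * Multiset.card (x ::ₘ s) := by
          rw [Multiset.card_cons]; push_cast; ring

lemma dG_add_le (g h : Multiset M) : dG (g + h) g ≤ (Multiset.card h : ℝ) := by
  refine Real.sSup_le (fun r hr => ?_) (Nat.cast_nonneg _)
  obtain ⟨f, ⟨a, b, ha, hb, hab, hfa, -⟩, rfl⟩ := hr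
  rw [gInt_add, add_sub_cancel_left]
  calc |gInt h f| ≤ a * Multiset.card h := abs_gInt_le hfa h
    _ ≤ 1 * Multiset.card h :=
        mul_le_mul_of_nonneg_right (by linarith) (Nat.cast_nonneg _)
    _ = Multiset.card h := one_mul _

lemma K_nonneg {S : Multiset M → ℝ} {K : ℝ} (hS : IsSelectiveCost S K) (m : M) : 0 ≤ K := by
  have hlip := hS.lip {m} 0
  have h1 : (1 : ℝ) ≤ dG ({m} : Multiset M) 0 := by
    refine le_csSup ⟨1, ?_⟩ ?_
    · rintro r ⟨f, ⟨a, b, ha, hb, hab, hfa, -⟩, rfl⟩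
      have h2 := abs_gInt_le hfa ({m} : Multiset M)
      have h0 : gInt (0 : Multiset M) f = 0 := gInt_zero f
      rw [h0, sub_zero]
      simp only [Multiset.card_singleton, Nat.cast_one, mul_one] at h2
      linarith
    · refine ⟨fun _ => 1, ⟨1, 0, zero_le_one, le_refl 0, by norm_num, fun x => by norm_num,
        fun x y => by simp⟩, ?_⟩
      rw [gInt_singleton, gInt_zero]; norm_num
  nlinarith [abs_nonneg (S ({m} : Multiset M) - S 0), hlip, h1]

lemma S_diff_le {S : Multiset M → ℝ} {K : ℝ} (hS : IsSelectiveCost S K) (hK : 0 ≤ K)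
    (g h : Multiset M) : |S (g + h) - S g| ≤ K * Multiset.card h :=
  (hS.lip (g + h) g).trans (mul_le_mul_of_nonneg_left (dG_add_le g h) hK)

lemma Phi_abs_le {S : Multiset M → ℝ} {K : ℝ} (hS : IsSelectiveCost S K) (hK : 0 ≤ K)
    (m m'' : M) (g : Multiset M) :
    |S (g + {m} + {m''}) - S (g + {m''}) - S (g + {m}) + S g| ≤ 2 * K := by
  have h1 : |S (g + {m} + {m''}) - S (g + {m})| ≤ K := by
    have := S_diff_le hS hK (g + {m}) ({m''} : Multiset M)
    simpa using this
  have h2 : |S (g + {m''}) - S g| ≤ K := by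
    have := S_diff_le hS hK g ({m''} : Multiset M)
    simpa using this
  have hre : S (g + {m} + {m''}) - S (g + {m''}) - S (g + {m}) + S g =
      (S (g + {m} + {m''}) - S (g + {m})) - (S (g + {m''}) - S g) := by ring
  rw [hre]
  refine (abs_sub _ _).trans ?_
  linarith

end AuxLip


section AuxPoisson

variable {M : Type*} [MetricSpace M] [MeasurableSpace M]

lemma hexp_tsum (t : ℝ) : ∑' k : ℕ, t ^ k / (Nat.factorial k : ℝ) = Real.exp t := by
  rw [Real.exp_eq_exp_ℝ]
  exact (congrFun (NormedSpace.exp_eq_tsum_div (𝔸 := ℝ)) t).symm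

lemma poisson_series_univ (π : Measure M) [IsFiniteMeasure π] :
    (Measure.sum fun k : ℕ =>
        ((Nat.factorial k : ℝ≥0∞))⁻¹ •
          Measure.map (fun x : Fin k → M => ∑ i, ({x i} : Multiset M))
            (Measure.pi fun _ : Fin k => π)) Set.univ =
      ENNReal.ofReal (Real.exp (π Set.univ).toReal) := by
  rw [Measure.sum_apply _ MeasurableSet.univ]
  have hterm : ∀ k : ℕ,
      (((Nat.factorial k : ℝ≥0∞))⁻¹ •
          Measure.map (fun x : Fin k → M => ∑ i, ({x i} : Multiset M))
            (Measure.pi fun _ : Fin k => π)) Set.univ =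
        ENNReal.ofReal ((π Set.univ).toReal ^ k / Nat.factorial k) := by
    intro k
    rw [Measure.smul_apply, Measure.map_apply (measurable_sumSingleton k) MeasurableSet.univ,
      Set.preimage_univ, Measure.pi_univ, Finset.prod_const, Finset.card_univ, Fintype.card_fin,
      smul_eq_mul]
    have h1 : ((Nat.factorial k : ℝ≥0∞))⁻¹ = ENNReal.ofReal ((Nat.factorial k : ℝ))⁻¹ := by
      rw [← ENNReal.ofReal_natCast (Nat.factorial k),
        ENNReal.ofReal_inv_of_pos (by exact_mod_cast Nat.factorial_pos k)]
    have h2 : π Set.univ = ENNReal.ofReal (π Set.univ).toReal :=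
      (ENNReal.ofReal_toReal (measure_ne_top π Set.univ)).symm
    rw [h1, h2, ← ENNReal.ofReal_pow ENNReal.toReal_nonneg,
      ← ENNReal.ofReal_mul (by positivity), inv_mul_eq_div]
    rw [ENNReal.ofReal_toReal (measure_ne_top π Set.univ)]
  simp_rw [hterm]
  rw [← ENNReal.ofReal_tsum_of_nonneg (fun k => by positivity)
    (Real.summable_pow_div_factorial _), hexp_tsum]

lemma poissonLaw_isProbability (π : Measure M) [IsFiniteMeasure π] :
    IsProbabilityMeasure (poissonLaw π) := by
  constructor
  rw [poissonLaw, Measure.smul_apply, poisson_series_univ, smul_eq_mul,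
    ← ENNReal.ofReal_mul (Real.exp_nonneg _), ← Real.exp_add, neg_add_cancel, Real.exp_zero,
    ENNReal.ofReal_one]

lemma integral_poissonLaw {Φ : Multiset M → ℝ} (hΦm : Measurable Φ) {C : ℝ}
    (hΦ : ∀ g, |Φ g| ≤ C) (π : Measure M) [IsFiniteMeasure π] :
    ∫ g, Φ g ∂(poissonLaw π) =
      Real.exp (-(π Set.univ).toReal) *
        ∑' k : ℕ, ((Nat.factorial k : ℝ))⁻¹ *
          ∫ x : Fin k → M, Φ (∑ i, ({x i} : Multiset M)) ∂(Measure.pi fun _ => π) := by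
  haveI hfin : IsFiniteMeasure (Measure.sum fun k : ℕ =>
      ((Nat.factorial k : ℝ≥0∞))⁻¹ •
        Measure.map (fun x : Fin k → M => ∑ i, ({x i} : Multiset M))
          (Measure.pi fun _ : Fin k => π)) :=
    ⟨by rw [poisson_series_univ]; exact ENNReal.ofReal_lt_top⟩
  have hInt : Integrable Φ (Measure.sum fun k : ℕ =>
      ((Nat.factorial k : ℝ≥0∞))⁻¹ •
        Measure.map (fun x : Fin k → M => ∑ i, ({x i} : Multiset M))
          (Measure.pi fun _ : Fin k => π)) :=
    ⟨hΦm.aestronglyMeasurable, HasFiniteIntegral.of_bounded (C := C)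
      (ae_of_all _ fun g => by rw [Real.norm_eq_abs]; exact hΦ g)⟩
  rw [poissonLaw, integral_smul_measure, ENNReal.toReal_ofReal (Real.exp_nonneg _), smul_eq_mul,
    integral_sum_measure hInt]
  congr 1
  refine tsum_congr fun k => ?_
  rw [integral_smul_measure,
    integral_map (measurable_sumSingleton k).aemeasurable hΦm.aestronglyMeasurable,
    ENNReal.toReal_inv, ENNReal.toReal_natCast, smul_eq_mul]

end AuxPoisson


section AuxPi

variable {M : Type*} [MetricSpace M] [MeasurableSpace M]

lemma pi_update_add {k : ℕ} (μ : Fin k → Measure M) [∀ i, IsFiniteMeasure (μ i)]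
    (j : Fin k) (ν₁ ν₂ : Measure M) [IsFiniteMeasure ν₁] [IsFiniteMeasure ν₂] :
    Measure.pi (Function.update μ j (ν₁ + ν₂)) =
      Measure.pi (Function.update μ j ν₁) + Measure.pi (Function.update μ j ν₂) := by
  classical
  haveI h1 : ∀ i, SigmaFinite (Function.update μ j (ν₁ + ν₂) i) := by
    intro i
    rcases eq_or_ne i j with rfl | h
    · rw [Function.update_self]; infer_instance
    · rw [Function.update_of_ne h]; infer_instance
  haveI h2 : ∀ i, SigmaFinite (Function.update μ j ν₁ i) := by
    intro i
    rcases eq_or_ne i j with rfl | h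
    · rw [Function.update_self]; infer_instance
    · rw [Function.update_of_ne h]; infer_instance
  haveI h3 : ∀ i, SigmaFinite (Function.update μ j ν₂ i) := by
    intro i
    rcases eq_or_ne i j with rfl | h
    · rw [Function.update_self]; infer_instance
    · rw [Function.update_of_ne h]; infer_instance
  refine Measure.pi_eq fun s hs => ?_
  rw [Measure.add_apply, Measure.pi_pi, Measure.pi_pi]
  have hfun : ∀ (c : Measure M) (i : Fin k),
      Function.update μ j c i (s i) = Function.update (fun i => μ i (s i)) j (c (s j)) i := by
    intro c i
    rcases eq_or_ne i j with rfl | h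
    · rw [Function.update_self, Function.update_self]
    · rw [Function.update_of_ne h, Function.update_of_ne h]
  simp_rw [hfun]
  rw [Finset.prod_update_of_mem (Finset.mem_univ j),
    Finset.prod_update_of_mem (Finset.mem_univ j),
    Finset.prod_update_of_mem (Finset.mem_univ j), Measure.add_apply]
  ring

lemma integral_pi_diff_le {k : ℕ} {F : (Fin k → M) → ℝ} (hFm : Measurable F) {C : ℝ}
    (hC0 : 0 ≤ C) (hF : ∀ x, |F x| ≤ C)
    (ρ σ : Measure M) [IsFiniteMeasure ρ] [IsFiniteMeasure σ] :
    |(∫ x, F x ∂(Measure.pi fun _ : Fin k => ρ + σ)) -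
        ∫ x, F x ∂(Measure.pi fun _ : Fin k => ρ)| ≤
      k * (C * (σ Set.univ).toReal * ((ρ + σ) Set.univ).toReal ^ (k - 1)) := by
  classical
  set μ : ℕ → Fin k → Measure M := fun j i => if (i : ℕ) < j then ρ + σ else ρ with hμ
  have hinst : ∀ (j : ℕ) (i : Fin k), IsFiniteMeasure (μ j i) := by
    intro j i
    rw [hμ]; dsimp only; split <;> infer_instance
  set f : ℕ → ℝ := fun j => ∫ x, F x ∂(Measure.pi (μ j)) with hf
  have hμ0 : μ 0 = fun _ => ρ := by funext i; simp [hμ]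
  have hμk : μ k = fun _ => ρ + σ := by funext i; simp [hμ, i.isLt]
  have key : ∀ j, j < k → |f (j + 1) - f j| ≤
      C * (σ Set.univ).toReal * ((ρ + σ) Set.univ).toReal ^ (k - 1) := by
    intro j hj
    haveI := hinst j
    haveI := hinst (j + 1)
    set jj : Fin k := ⟨j, hj⟩ with hjj
    have hupd : μ (j + 1) = Function.update (μ j) jj (ρ + σ) := by
      funext i
      rcases eq_or_ne i jj with rfl | h
      · rw [Function.update_self, hμ]
        simp [hjj]
      · rw [Function.update_of_ne h, hμ]
        dsimp only
        have hiff : ((i : ℕ) < j + 1) ↔ ((i : ℕ) < j) := by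
          constructor
          · intro hi
            rcases Nat.lt_succ_iff_lt_or_eq.1 hi with h' | h'
            · exact h'
            · exact absurd (Fin.ext h' : i = jj) h
          · exact fun hi => Nat.lt_succ_of_lt hi
        simp only [hiff]
    have h0 : Function.update (μ j) jj ρ = μ j := by
      funext i
      rcases eq_or_ne i jj with rfl | h
      · rw [Function.update_self, hμ]
        simp [hjj]
      · rw [Function.update_of_ne h]
    haveI hud : ∀ i, IsFiniteMeasure (Function.update (μ j) jj σ i) := by
      intro i
      rcases eq_or_ne i jj with rfl | h
      · rw [Function.update_self]; infer_instance
      · rw [Function.update_of_ne h]; exact hinst j i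
    have hsplit : Measure.pi (μ (j + 1)) =
        Measure.pi (μ j) + Measure.pi (Function.update (μ j) jj σ) := by
      calc Measure.pi (μ (j + 1)) = Measure.pi (Function.update (μ j) jj (ρ + σ)) := by
            rw [hupd]
        _ = Measure.pi (Function.update (μ j) jj ρ) +
              Measure.pi (Function.update (μ j) jj σ) := pi_update_add (μ j) jj ρ σ
        _ = Measure.pi (μ j) + Measure.pi (Function.update (μ j) jj σ) := by rw [h0]
    have hIj : Integrable F (Measure.pi (μ j)) :=
      ⟨hFm.aestronglyMeasurable, HasFiniteIntegral.of_bounded (C := C)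
        (ae_of_all _ fun x => by rw [Real.norm_eq_abs]; exact hF x)⟩
    have hIu : Integrable F (Measure.pi (Function.update (μ j) jj σ)) :=
      ⟨hFm.aestronglyMeasurable, HasFiniteIntegral.of_bounded (C := C)
        (ae_of_all _ fun x => by rw [Real.norm_eq_abs]; exact hF x)⟩
    have hadd : f (j + 1) = f j + ∫ x, F x ∂(Measure.pi (Function.update (μ j) jj σ)) := by
      rw [hf]; dsimp only; rw [hsplit, integral_add_measure hIj hIu]
    rw [hadd, add_sub_cancel_left]
    have hb := norm_integral_le_of_norm_le_const
      (μ := Measure.pi (Function.update (μ j) jj σ)) (C := C)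
      (ae_of_all _ fun x => by rw [Real.norm_eq_abs]; exact hF x) (f := F)
    rw [Real.norm_eq_abs] at hb
    refine hb.trans ?_
    rw [mul_assoc]
    refine mul_le_mul_of_nonneg_left ?_ hC0
    rw [measureReal_def, Measure.pi_univ, ENNReal.toReal_prod,
      ← Finset.mul_prod_erase Finset.univ _ (Finset.mem_univ jj), Function.update_self]
    refine mul_le_mul_of_nonneg_left ?_ ENNReal.toReal_nonneg
    calc ∏ i ∈ Finset.univ.erase jj, ((Function.update (μ j) jj σ i) Set.univ).toReal
        ≤ ∏ _i ∈ Finset.univ.erase jj, ((ρ + σ) Set.univ).toReal := by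
          refine Finset.prod_le_prod (fun i _ => ENNReal.toReal_nonneg) fun i hi => ?_
          rw [Function.update_of_ne (Finset.ne_of_mem_erase hi)]
          refine ENNReal.toReal_mono (measure_ne_top _ _) ?_
          rw [hμ]; dsimp only; split
          · exact le_rfl
          · rw [Measure.add_apply]; exact le_self_add
      _ = ((ρ + σ) Set.univ).toReal ^ (k - 1) := by
          rw [Finset.prod_const, Finset.card_erase_of_mem (Finset.mem_univ jj),
            Finset.card_univ, Fintype.card_fin]
  have h0' : f 0 = ∫ x, F x ∂(Measure.pi fun _ : Fin k => ρ) := by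
    rw [hf]; dsimp only; rw [hμ0]
  have hk' : f k = ∫ x, F x ∂(Measure.pi fun _ : Fin k => ρ + σ) := by
    rw [hf]; dsimp only; rw [hμk]
  rw [← hk', ← h0', ← Finset.sum_range_sub f]
  refine (Finset.abs_sum_le_sum_abs _ _).trans ?_
  refine (Finset.sum_le_sum fun j hj => key j (Finset.mem_range.1 hj)).trans ?_
  rw [Finset.sum_const, Finset.card_range, nsmul_eq_mul]

end AuxPi


section AuxDiff

variable {M : Type*} [MetricSpace M] [MeasurableSpace M]

lemma abs_exp_comb_le {r s C A A' : ℝ} (hr0 : 0 ≤ r) (hs0 : 0 ≤ s) (hC0 : 0 ≤ C)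
    (hA : |A| ≤ C * Real.exp r) (hAA' : |A - A'| ≤ C * s * Real.exp (r + s)) :
    |Real.exp (-r) * A - Real.exp (-(r + s)) * A'| ≤ 2 * C * s := by
  have hexp0 : 0 ≤ Real.exp (-r) - Real.exp (-(r + s)) := by
    have : Real.exp (-(r + s)) ≤ Real.exp (-r) := Real.exp_le_exp.2 (by linarith)
    linarith
  have hexp1 : Real.exp (-r) - Real.exp (-(r + s)) ≤ s * Real.exp (-r) := by
    rw [show -(r + s) = -r + -s by ring, Real.exp_add]
    nlinarith [Real.add_one_le_exp (-s), Real.exp_pos (-r), Real.exp_pos (-s)]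
  have hsplit : Real.exp (-r) * A - Real.exp (-(r + s)) * A' =
      (Real.exp (-r) - Real.exp (-(r + s))) * A + Real.exp (-(r + s)) * (A - A') := by ring
  rw [hsplit]
  refine (abs_add_le _ _).trans ?_
  rw [abs_mul, abs_mul, abs_of_nonneg hexp0, abs_of_nonneg (Real.exp_pos _).le]
  have t1 : (Real.exp (-r) - Real.exp (-(r + s))) * |A| ≤
      (s * Real.exp (-r)) * (C * Real.exp r) :=
    mul_le_mul hexp1 hA (abs_nonneg _) (mul_nonneg hs0 (Real.exp_pos _).le)
  have t2 : Real.exp (-(r + s)) * |A - A'| ≤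
      Real.exp (-(r + s)) * (C * s * Real.exp (r + s)) :=
    mul_le_mul_of_nonneg_left hAA' (Real.exp_pos _).le
  have e1 : Real.exp (-r) * Real.exp r = 1 := by
    rw [← Real.exp_add, show -r + r = 0 by ring, Real.exp_zero]
  have e2 : Real.exp (-(r + s)) * Real.exp (r + s) = 1 := by
    rw [← Real.exp_add, show -(r + s) + (r + s) = 0 by ring, Real.exp_zero]
  calc (Real.exp (-r) - Real.exp (-(r + s))) * |A| + Real.exp (-(r + s)) * |A - A'|
      ≤ (s * Real.exp (-r)) * (C * Real.exp r) +
          Real.exp (-(r + s)) * (C * s * Real.exp (r + s)) := add_le_add t1 t2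
    _ = C * s * (Real.exp (-r) * Real.exp r) +
          C * s * (Real.exp (-(r + s)) * Real.exp (r + s)) := by ring
    _ = 2 * C * s := by rw [e1, e2]; ring

lemma integral_poissonLaw_add_sub {Φ : Multiset M → ℝ} (hΦm : Measurable Φ) {C : ℝ}
    (hC0 : 0 ≤ C) (hΦ : ∀ g, |Φ g| ≤ C) (ρ σ : Measure M)
    [IsFiniteMeasure ρ] [IsFiniteMeasure σ] :
    |(∫ g, Φ g ∂(poissonLaw ρ)) - ∫ g, Φ g ∂(poissonLaw (ρ + σ))| ≤
      2 * C * (σ Set.univ).toReal := by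
  have hr0 : (0:ℝ) ≤ (ρ Set.univ).toReal := ENNReal.toReal_nonneg
  have hs0 : (0:ℝ) ≤ (σ Set.univ).toReal := ENNReal.toReal_nonneg
  have hr' : ((ρ + σ) Set.univ).toReal = (ρ Set.univ).toReal + (σ Set.univ).toReal := by
    rw [Measure.add_apply, ENNReal.toReal_add (measure_ne_top _ _) (measure_ne_top _ _)]
  have hEρ := integral_poissonLaw hΦm hΦ ρ
  have hEρ' := integral_poissonLaw hΦm hΦ (ρ + σ)
  rw [hr'] at hEρ'
  rw [hEρ, hEρ']
  set r : ℝ := (ρ Set.univ).toReal with hr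
  set s : ℝ := (σ Set.univ).toReal with hs
  set a : ℕ → ℝ := fun k => (Nat.factorial k : ℝ)⁻¹ *
    ∫ x : Fin k → M, Φ (∑ i, ({x i} : Multiset M)) ∂(Measure.pi fun _ => ρ) with ha
  set a' : ℕ → ℝ := fun k => (Nat.factorial k : ℝ)⁻¹ *
    ∫ x : Fin k → M, Φ (∑ i, ({x i} : Multiset M)) ∂(Measure.pi fun _ => ρ + σ) with ha'
  -- generic bound on coefficients
  have habs : ∀ (π : Measure M) (_ : IsFiniteMeasure π) (k : ℕ),
      |(Nat.factorial k : ℝ)⁻¹ *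
          ∫ x : Fin k → M, Φ (∑ i, ({x i} : Multiset M)) ∂(Measure.pi fun _ => π)| ≤
        C * ((π Set.univ).toReal ^ k / Nat.factorial k) := by
    intro π hπ k
    haveI := hπ
    have hI := norm_integral_le_of_norm_le_const (μ := Measure.pi fun _ : Fin k => π) (C := C)
      (ae_of_all _ fun x => by rw [Real.norm_eq_abs]; exact hΦ _)
      (f := fun x : Fin k → M => Φ (∑ i, ({x i} : Multiset M)))
    rw [Real.norm_eq_abs, measureReal_def, Measure.pi_univ, Finset.prod_const, Finset.card_univ, Fintype.card_fin,
      ENNReal.toReal_pow] at hI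
    rw [abs_mul, abs_of_nonneg (inv_nonneg.2 (Nat.cast_nonneg _))]
    calc (Nat.factorial k : ℝ)⁻¹ * |∫ x : Fin k → M, Φ (∑ i, ({x i} : Multiset M))
          ∂(Measure.pi fun _ => π)|
        ≤ (Nat.factorial k : ℝ)⁻¹ * (C * (π Set.univ).toReal ^ k) :=
          mul_le_mul_of_nonneg_left hI (by positivity)
      _ = C * ((π Set.univ).toReal ^ k / Nat.factorial k) := by ring
  have habsa : ∀ k, ‖a k‖ ≤ C * (r ^ k / Nat.factorial k) := fun k => by
    rw [Real.norm_eq_abs, ha]; exact habs ρ inferInstance k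
  have habsa' : ∀ k, ‖a' k‖ ≤ C * ((r + s) ^ k / Nat.factorial k) := fun k => by
    rw [Real.norm_eq_abs, ha']
    have h := habs (ρ + σ) inferInstance k
    rw [hr'] at h
    exact h
  have hBsum : ∀ t : ℝ, Summable fun k : ℕ => C * (t ^ k / Nat.factorial k) := fun t =>
    (Real.summable_pow_div_factorial t).mul_left C
  have hBtsum : ∀ t : ℝ, ∑' k : ℕ, C * (t ^ k / Nat.factorial k) = C * Real.exp t := fun t => by
    rw [tsum_mul_left, hexp_tsum]
  have hSa : Summable a := Summable.of_norm_bounded (hBsum r) habsa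
  have hSa' : Summable a' := Summable.of_norm_bounded (hBsum (r + s)) habsa'
  -- the shifted exponential series
  set v : ℕ → ℝ := fun k => (k : ℝ) * (r + s) ^ (k - 1) / Nat.factorial k with hv
  have hv_succ : ∀ k : ℕ, v (k + 1) = (r + s) ^ k / Nat.factorial k := by
    intro k
    rw [hv]; dsimp only
    rw [Nat.factorial_succ, Nat.add_sub_cancel]
    have h1 : ((k:ℝ) + 1) ≠ 0 := by positivity
    have h2 : (Nat.factorial k : ℝ) ≠ 0 := by exact_mod_cast (Nat.factorial_pos k).ne'
    push_cast
    field_simp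
  have hSv : Summable v := by
    rw [← summable_nat_add_iff 1]
    simp only [hv_succ]
    exact Real.summable_pow_div_factorial _
  have hvtsum : ∑' k, v k = Real.exp (r + s) := by
    rw [Summable.tsum_eq_zero_add hSv]
    simp only [hv_succ]
    have hv0 : v 0 = 0 := by rw [hv]; norm_num
    rw [hv0, zero_add, hexp_tsum]
  -- bound on the difference of coefficients
  have hdd : ∀ k, ‖a k - a' k‖ ≤ C * s * v k := by
    intro k
    have hFm : Measurable fun x : Fin k → M => Φ (∑ i, ({x i} : Multiset M)) :=
      hΦm.comp (measurable_sumSingleton k)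
    have hdiff := integral_pi_diff_le hFm hC0 (fun x => hΦ _) ρ σ
    rw [hr'] at hdiff
    rw [Real.norm_eq_abs, ha, ha']; dsimp only
    rw [← mul_sub, abs_mul, abs_of_nonneg (inv_nonneg.2 (Nat.cast_nonneg _)), abs_sub_comm]
    calc (Nat.factorial k : ℝ)⁻¹ *
        |(∫ x : Fin k → M, Φ (∑ i, ({x i} : Multiset M)) ∂(Measure.pi fun _ => ρ + σ)) -
          ∫ x : Fin k → M, Φ (∑ i, ({x i} : Multiset M)) ∂(Measure.pi fun _ => ρ)|
        ≤ (Nat.factorial k : ℝ)⁻¹ * (k * (C * s * (r + s) ^ (k - 1))) :=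
          mul_le_mul_of_nonneg_left hdiff (by positivity)
      _ = C * s * v k := by rw [hv]; dsimp only; ring
  have hSdn : Summable fun k => ‖a k - a' k‖ :=
    Summable.of_nonneg_of_le (fun k => norm_nonneg _) hdd (hSv.mul_left (C * s))
  have hA : |∑' k, a k| ≤ C * Real.exp r := by
    rw [← Real.norm_eq_abs]
    refine (norm_tsum_le_tsum_norm (Summable.of_nonneg_of_le (fun k => norm_nonneg _)
      habsa (hBsum r))).trans ?_
    rw [← hBtsum r]
    exact Summable.tsum_le_tsum habsa (Summable.of_nonneg_of_le (fun k => norm_nonneg _)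
      habsa (hBsum r)) (hBsum r)
  have hAd : |(∑' k, a k) - ∑' k, a' k| ≤ C * s * Real.exp (r + s) := by
    rw [← Summable.tsum_sub hSa hSa', ← Real.norm_eq_abs]
    refine (norm_tsum_le_tsum_norm hSdn).trans ?_
    have hvsum : ∑' k, C * s * v k = C * s * Real.exp (r + s) := by
      rw [tsum_mul_left, hvtsum]
    rw [← hvsum]
    exact Summable.tsum_le_tsum hdd hSdn (hSv.mul_left (C * s))
  exact abs_exp_comb_le hr0 hs0 hC0 hA hAd

end AuxDiff


variable {M : Type*} [MetricSpace M] [CompleteSpace M] [TopologicalSpace.SeparableSpace M]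
  [MeasurableSpace M] [BorelSpace M]

theorem Kker_int_bounds (S : Multiset M → ℝ) (K : ℝ) (hS : IsSelectiveCost S K)
    (ρ ρ' η : Measure M) [IsFiniteMeasure ρ] [IsFiniteMeasure ρ'] [IsFiniteMeasure η]
    (hle : ∀ A : Set M, MeasurableSet A → ρ A ≤ ρ' A) :
    (∀ m : M, |∫ m'', Kker S ρ m m'' ∂η| ≤ 2 * K * (η Set.univ).toReal) ∧
    (∀ m : M, |(∫ m'', Kker S ρ m m'' ∂η) - ∫ m'', Kker S ρ' m m'' ∂η| ≤
        16 * K * ((ρ' Set.univ).toReal - (ρ Set.univ).toReal) * (η Set.univ).toReal) := by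
  classical
  have hle' : ρ ≤ ρ' := Measure.le_iff.2 hle
  have hσρ : ρ + (ρ' - ρ) = ρ' := by
    rw [add_comm]; exact Measure.sub_add_cancel_of_le hle'
  -- uniform bound on the kernel values
  have hKbd : ∀ (π : Measure M), IsFiniteMeasure π → ∀ (m : M), 0 ≤ K →
      ∀ m'' : M, ‖Kker S π m m''‖ ≤ 2 * K := by
    intro π hπ m hK m''
    haveI := hπ
    haveI : IsProbabilityMeasure (poissonLaw π) := poissonLaw_isProbability π
    have hb := norm_integral_le_of_norm_le_const (μ := poissonLaw π) (C := 2 * K)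
      (ae_of_all _ fun g => by rw [Real.norm_eq_abs]; exact Phi_abs_le hS hK m m'' g)
      (f := fun g : Multiset M => S (g + {m} + {m''}) - S (g + {m''}) - S (g + {m}) + S g)
    rw [measureReal_def, measure_univ, ENNReal.toReal_one, mul_one] at hb
    exact hb
  -- strong measurability of the kernel in `m''`
  have hKmeas : ∀ (π : Measure M), IsFiniteMeasure π → ∀ m : M,
      StronglyMeasurable fun m'' : M => Kker S π m m'' := by
    intro π hπ m
    haveI := hπ
    haveI : IsProbabilityMeasure (poissonLaw π) := poissonLaw_isProbability π
    have h1 : Measurable fun p : M × Multiset M => p.2 + {m} + {p.1} :=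
      measurable_addSingleton.comp
        (((measurable_addConst {m}).comp measurable_snd).prodMk measurable_fst)
    have h2 : Measurable fun p : M × Multiset M => p.2 + {p.1} :=
      measurable_addSingleton.comp (measurable_snd.prodMk measurable_fst)
    have h3 : Measurable fun p : M × Multiset M => p.2 + {m} :=
      (measurable_addConst _).comp measurable_snd
    have hf2 : Measurable fun p : M × Multiset M =>
        S (p.2 + {m} + {p.1}) - S (p.2 + {p.1}) - S (p.2 + {m}) + S p.2 :=
      (((hS.measurable.comp h1).sub (hS.measurable.comp h2)).sub
        (hS.measurable.comp h3)).add (hS.measurable.comp measurable_snd)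
    exact hf2.stronglyMeasurable.integral_prod_right'
  constructor
  · intro m
    have hK : 0 ≤ K := K_nonneg hS m
    have h := norm_integral_le_of_norm_le_const (μ := η) (C := 2 * K)
      (ae_of_all _ fun m'' => hKbd ρ inferInstance m hK m'')
      (f := fun m'' => Kker S ρ m m'')
    rwa [Real.norm_eq_abs] at h
  · intro m
    have hK : 0 ≤ K := K_nonneg hS m
    have hIρ : Integrable (fun m'' => Kker S ρ m m'') η :=
      ⟨(hKmeas ρ inferInstance m).aestronglyMeasurable,
        HasFiniteIntegral.of_bounded (C := 2 * K)
          (ae_of_all _ fun m'' => hKbd ρ inferInstance m hK m'')⟩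
    have hIρ' : Integrable (fun m'' => Kker S ρ' m m'') η :=
      ⟨(hKmeas ρ' inferInstance m).aestronglyMeasurable,
        HasFiniteIntegral.of_bounded (C := 2 * K)
          (ae_of_all _ fun m'' => hKbd ρ' inferInstance m hK m'')⟩
    have hpt : ∀ m'' : M, ‖Kker S ρ m m'' - Kker S ρ' m m''‖ ≤
        2 * (2 * K) * ((ρ' - ρ) Set.univ).toReal := by
      intro m''
      have h1 : Measurable fun g : Multiset M => g + {m} + {m''} :=
        (measurable_addConst {m''}).comp (measurable_addConst {m})
      have hΦm : Measurable fun g : Multiset M =>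
          S (g + {m} + {m''}) - S (g + {m''}) - S (g + {m}) + S g :=
        (((hS.measurable.comp h1).sub
            (hS.measurable.comp (measurable_addConst {m''}))).sub
          (hS.measurable.comp (measurable_addConst {m}))).add hS.measurable
      have hd := integral_poissonLaw_add_sub hΦm (by positivity)
        (Phi_abs_le hS hK m m'') ρ (ρ' - ρ)
      rw [hσρ] at hd
      rw [Real.norm_eq_abs]
      exact hd
    have hsub : (∫ m'', Kker S ρ m m'' ∂η) - ∫ m'', Kker S ρ' m m'' ∂η =
        ∫ m'', (Kker S ρ m m'' - Kker S ρ' m m'') ∂η := (integral_sub hIρ hIρ').symm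
    rw [hsub]
    have h := norm_integral_le_of_norm_le_const (μ := η)
      (C := 2 * (2 * K) * ((ρ' - ρ) Set.univ).toReal) (ae_of_all _ hpt)
      (f := fun m'' => Kker S ρ m m'' - Kker S ρ' m m'')
    rw [Real.norm_eq_abs, measureReal_def] at h
    refine h.trans ?_
    have hs_eq : ((ρ' - ρ) Set.univ).toReal = (ρ' Set.univ).toReal - (ρ Set.univ).toReal := by
      have h2 : (ρ + (ρ' - ρ)) Set.univ = ρ' Set.univ := by rw [hσρ]
      rw [Measure.add_apply] at h2
      have h4 : (ρ Set.univ).toReal + ((ρ' - ρ) Set.univ).toReal = (ρ' Set.univ).toReal := by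
        rw [← ENNReal.toReal_add (measure_ne_top _ _) (measure_ne_top _ _), h2]
      linarith
    rw [← hs_eq]
    have ht : (0:ℝ) ≤ ((ρ' - ρ) Set.univ).toReal := ENNReal.toReal_nonneg
    have he : (0:ℝ) ≤ (η Set.univ).toReal := ENNReal.toReal_nonneg
    nlinarith [mul_nonneg (mul_nonneg hK ht) he]


end MSEW
end
end
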